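/- Let b, c, d be pairwise distinct pure basis elements of the real Cayley–Dickson algebra 𝔸ₙ (all εᵢ = 1) with d ≠ ±(b·c). Then each of the three triples t₁ = (b, c, d), t₂ = (b, b·c, d), t₃ = (c, b·c, d) has a well-defined non-associativity type in {A, B, C, X}, and the ordered triple of types (type(t₁), type(t₂), type(t₃)) is one of the following eight patterns: (A,A,A), (A,C,C), (X,B,B), (B,B,A), (B,X,C), (C,A,B), (C,C,X), (X,X,X). -/

import Mathlib

noncomputable section

/-- The real Cayley–Dickson algebra carrier: `CD 0 = ℝ`, `CD (n+1) = CD n × CD n`. -/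
def CD : ℕ → Type
  | 0 => ℝ
  | n + 1 => CD n × CD n

instance CD.instAddCommGroup : (n : ℕ) → AddCommGroup (CD n)
  | 0 => inferInstanceAs (AddCommGroup ℝ)
  | n + 1 =>
    letI := CD.instAddCommGroup n
    inferInstanceAs (AddCommGroup (CD n × CD n))

instance CD.instModule : (n : ℕ) → Module ℝ (CD n)
  | 0 => inferInstanceAs (Module ℝ ℝ)
  | n + 1 =>
    letI := CD.instModule n
    inferInstanceAs (Module ℝ (CD n × CD n))

/-- The unit of the Cayley–Dickson algebra. -/
def CD.one : (n : ℕ) → CD n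
  | 0 => (1 : ℝ)
  | n + 1 => (CD.one n, 0)

/-- Conjugation: `(a, b)* = (a*, -b)`, identity on `ℝ`. -/
def CD.conj : (n : ℕ) → CD n → CD n
  | 0, a => a
  | n + 1, x => (CD.conj n x.1, -x.2)

/-- Cayley–Dickson multiplication with sign vector `ε`:
`(a,b)·(c,d) = (a·c − ε (n+1) • (d*·b), d·a + b·c*)`. -/
def CD.mul (ε : ℕ → ℝ) : (n : ℕ) → CD n → CD n → CD n
  | 0, a, c => (show ℝ from a) * (show ℝ from c)
  | n + 1, x, y =>
    (CD.mul ε n x.1 y.1 - ε (n + 1) • CD.mul ε n (CD.conj n y.2) x.2,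
     CD.mul ε n y.2 x.1 + CD.mul ε n x.2 (CD.conj n y.1))

/-- The standard basis element `e α` of `CD n`, for `α ⊆ {1,…,n}`. -/
def CD.basis : (n : ℕ) → Finset ℕ → CD n
  | 0, _ => (1 : ℝ)
  | n + 1, α =>
    if n + 1 ∈ α then ((0 : CD n), CD.basis n (α.erase (n + 1)))
    else (CD.basis n α, (0 : CD n))

/-- `α` indexes a pure basis element of `CD n`. -/
def CD.IsPure (n : ℕ) (α : Finset ℕ) : Prop :=
  α.Nonempty ∧ α ⊆ Finset.Icc 1 n

/-- The associator `[x,y,z] = (x·y)·z − x·(y·z)`. -/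
def CD.assoc (ε : ℕ → ℝ) (n : ℕ) (x y z : CD n) : CD n :=
  CD.mul ε n (CD.mul ε n x y) z - CD.mul ε n x (CD.mul ε n y z)

/-- A triad: indices of three pairwise distinct pure basis elements `b, c, d`
with `d ≠ ±(b·c)` (all signs `εᵢ = 1`). -/
def CD.IsTriad (n : ℕ) (α β γ : Finset ℕ) : Prop :=
  CD.IsPure n α ∧ CD.IsPure n β ∧ CD.IsPure n γ ∧
  α ≠ β ∧ α ≠ γ ∧ β ≠ γ ∧
  CD.basis n γ ≠ CD.mul (fun _ => 1) n (CD.basis n α) (CD.basis n β) ∧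
  CD.basis n γ ≠ -CD.mul (fun _ => 1) n (CD.basis n α) (CD.basis n β)

/-- Multiplication with all signs `εᵢ = 1`. -/
abbrev CD.mul1 (n : ℕ) : CD n → CD n → CD n := CD.mul (fun _ => 1) n

/-- Associator with all signs `εᵢ = 1`. -/
abbrev CD.assoc1 (n : ℕ) : CD n → CD n → CD n → CD n := CD.assoc (fun _ => 1) n

/-- The four non-associativity types. -/
inductive NAType
  | A | B | C | X
  deriving DecidableEq

/-- The triple `(x,y,z)` has the given non-associativity type, where the
Type 1, 2 and 3 associators of `(x,y,z)` are `[x,z,y]`, `[x,y,z]`, `[y,x,z]`. -/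
def CD.hasType (n : ℕ) (x y z : CD n) : NAType → Prop
  | NAType.A => CD.assoc1 n x z y ≠ 0 ∧ CD.assoc1 n x y z = 0 ∧ CD.assoc1 n y x z = 0
  | NAType.B => CD.assoc1 n x z y = 0 ∧ CD.assoc1 n x y z ≠ 0 ∧ CD.assoc1 n y x z = 0
  | NAType.C => CD.assoc1 n x z y = 0 ∧ CD.assoc1 n x y z = 0 ∧ CD.assoc1 n y x z ≠ 0
  | NAType.X => CD.assoc1 n x z y ≠ 0 ∧ CD.assoc1 n x y z ≠ 0 ∧ CD.assoc1 n y x z ≠ 0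

namespace CDproof
open Finset
open scoped symmDiff

lemma CD.mul_def (ε : ℕ → ℝ) (n : ℕ) (x y : CD (n+1)) :
    CD.mul ε (n+1) x y =
      (CD.mul ε n x.1 y.1 - ε (n + 1) • CD.mul ε n (CD.conj n y.2) x.2,
       CD.mul ε n y.2 x.1 + CD.mul ε n x.2 (CD.conj n y.1)) := rfl

lemma CD.conj_def (n : ℕ) (x : CD (n+1)) :
    CD.conj (n+1) x = (CD.conj n x.1, -x.2) := rfl

lemma CD.zero_def (n : ℕ) : (0 : CD (n+1)) = ((0 : CD n), (0 : CD n)) := rfl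
lemma CD.smul_def (n : ℕ) (r : ℝ) (x : CD (n+1)) :
    r • x = ((r • x.1, r • x.2) : CD n × CD n) := rfl
lemma CD.neg_def (n : ℕ) (x : CD (n+1)) : -x = ((-x.1, -x.2) : CD n × CD n) := rfl
lemma CD.mk_eq_zero (n : ℕ) (a b : CD n) :
    ((a, b) : CD (n+1)) = 0 ↔ a = 0 ∧ b = 0 := by
  erw [CD.zero_def]; exact Prod.mk.injEq a b 0 0 ▸ Iff.rfl

lemma CD.mk_inj (n : ℕ) {a b c d : CD n} (h1 : a = c) (h2 : b = d) :
    ((a, b) : CD (n+1)) = (c, d) := by rw [h1, h2]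

lemma CD.conj_zero : ∀ n, CD.conj n (0 : CD n) = 0
  | 0 => rfl
  | n+1 => by
    erw [CD.zero_def, CD.conj_def]
    simp [CD.conj_zero n, CD.zero_def]
    rfl

lemma CD.conj_smul : ∀ n (r : ℝ) (x : CD n), CD.conj n (r • x) = r • CD.conj n x
  | 0, r, x => rfl
  | n+1, r, x => by
    erw [CD.smul_def, CD.conj_def, CD.conj_def, CD.smul_def]
    simp [CD.conj_smul n r x.1]
    rfl

lemma CD.mul_zero' (ε : ℕ → ℝ) :
    ∀ n, ∀ x : CD n, CD.mul ε n x 0 = 0 ∧ CD.mul ε n 0 x = 0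
  | 0, x => by
    constructor
    · show (show ℝ from x) * (0:ℝ) = (0:ℝ); ring
    · show (0:ℝ) * (show ℝ from x) = (0:ℝ); ring
  | n+1, x => by
    rw [CD.mul_def, CD.mul_def, CD.zero_def]
    constructor <;>
    · simp only [Prod.fst, Prod.snd, CD.conj_zero n, Prod.mk.injEq,
        (CD.mul_zero' ε n x.1).1, (CD.mul_zero' ε n x.1).2,
        (CD.mul_zero' ε n x.2).1, (CD.mul_zero' ε n x.2).2,
        (CD.mul_zero' ε n (CD.conj n x.1)).1, (CD.mul_zero' ε n (CD.conj n x.1)).2,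
        (CD.mul_zero' ε n (CD.conj n x.2)).1, (CD.mul_zero' ε n (CD.conj n x.2)).2,
        smul_zero, sub_zero, add_zero, zero_add, sub_self, and_self]
      rfl

lemma CD.smul_mul (ε : ℕ → ℝ) :
    ∀ n (r : ℝ) (x y : CD n), CD.mul ε n (r • x) y = r • CD.mul ε n x y ∧
      CD.mul ε n x (r • y) = r • CD.mul ε n x y
  | 0, r, x, y => by
    constructor
    · show (r * show ℝ from x) * (show ℝ from y) = r * ((show ℝ from x) * (show ℝ from y)); ring
    · show (show ℝ from x) * (r * show ℝ from y) = r * ((show ℝ from x) * (show ℝ from y)); ring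
  | n+1, r, x, y => by
    constructor <;>
    · erw [CD.mul_def, CD.mul_def, CD.smul_def, CD.smul_def]
      simp only [CD.mul_def, CD.smul_def, Prod.fst, Prod.snd, Prod.mk.injEq, CD.conj_smul n,
        (CD.smul_mul ε n r x.1 y.1).1, (CD.smul_mul ε n r x.1 y.1).2,
        (CD.smul_mul ε n r (CD.conj n y.2) x.2).1, (CD.smul_mul ε n r (CD.conj n y.2) x.2).2,
        (CD.smul_mul ε n r y.2 x.1).1, (CD.smul_mul ε n r y.2 x.1).2,
        (CD.smul_mul ε n r x.2 (CD.conj n y.1)).1, (CD.smul_mul ε n r x.2 (CD.conj n y.1)).2]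
      exact CD.mk_inj n (by module) (by module)


lemma CD.basis_def_mem (n : ℕ) (α : Finset ℕ) (h : n+1 ∈ α) :
    CD.basis (n+1) α = ((0 : CD n), CD.basis n (α.erase (n+1))) := by
  rw [CD.basis]; erw [if_pos h]

lemma CD.basis_def_not_mem (n : ℕ) (α : Finset ℕ) (h : n+1 ∉ α) :
    CD.basis (n+1) α = (CD.basis n α, (0 : CD n)) := by
  rw [CD.basis]; erw [if_neg h]

lemma CD.basis_ne_zero : ∀ n (α : Finset ℕ), CD.basis n α ≠ 0
  | 0, α => by show (1:ℝ) ≠ 0; norm_num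
  | n+1, α => by
    by_cases h : n+1 ∈ α
    · rw [CD.basis_def_mem n α h, CD.zero_def]
      intro hh
      exact CD.basis_ne_zero n (α.erase (n+1)) (congrArg Prod.snd hh)
    · rw [CD.basis_def_not_mem n α h, CD.zero_def]
      intro hh
      exact CD.basis_ne_zero n α (congrArg Prod.fst hh)

/-- `chi α` is the conjugation sign of `e_α`. -/
def chi (α : Finset ℕ) : ℝ := if α = ∅ then 1 else -1

lemma chi_pm (α : Finset ℕ) : chi α = 1 ∨ chi α = -1 := by
  unfold chi; split_ifs <;> simp

lemma chi_empty : chi ∅ = 1 := by simp [chi]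
lemma chi_of_ne (α : Finset ℕ) (h : α ≠ ∅) : chi α = -1 := by simp [chi, h]

lemma subset_erase_of_subset_Icc {n : ℕ} {α : Finset ℕ} (h : α ⊆ Finset.Icc 1 (n+1)) :
    α.erase (n+1) ⊆ Finset.Icc 1 n := by
  intro x hx
  rw [Finset.mem_erase] at hx
  have := h hx.2
  rw [Finset.mem_Icc] at this ⊢
  omega

lemma subset_of_subset_Icc {n : ℕ} {α : Finset ℕ} (h : α ⊆ Finset.Icc 1 (n+1))
    (hm : n+1 ∉ α) : α ⊆ Finset.Icc 1 n := by
  intro x hx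
  have := h hx
  rw [Finset.mem_Icc] at this ⊢
  have : x ≠ n+1 := fun he => hm (he ▸ hx)
  omega

lemma CD.conj_basis : ∀ n (α : Finset ℕ), α ⊆ Finset.Icc 1 n →
    CD.conj n (CD.basis n α) = chi α • CD.basis n α
  | 0, α, h => by
    have : α = ∅ := Finset.subset_empty.mp (by simpa using h)
    subst this
    show (1:ℝ) = chi ∅ • (1:ℝ)
    simp [chi_empty]
  | n+1, α, h => by
    by_cases hm : n+1 ∈ α
    · have hne : α ≠ ∅ := fun he => by simp [he] at hm
      erw [CD.basis_def_mem n α hm, CD.conj_def, CD.smul_def]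
      simp only [Prod.fst, Prod.snd, CD.conj_zero n, smul_zero]
      exact CD.mk_inj n rfl (by
        rw [chi_of_ne α hne, neg_one_smul])
    · erw [CD.basis_def_not_mem n α hm, CD.conj_def, CD.smul_def]
      simp only [Prod.fst, Prod.snd, smul_zero, neg_zero]
      exact CD.mk_inj n (CD.conj_basis n α (subset_of_subset_Icc h hm)) rfl

/-- The sign `sg n α β` with `e_α · e_β = sg n α β • e_{α ∆ β}` (all ε = 1). -/
def sg : ℕ → Finset ℕ → Finset ℕ → ℝ
  | 0, _, _ => 1
  | n+1, α, β =>
    if n+1 ∈ α then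
      if n+1 ∈ β then -chi (β.erase (n+1)) * sg n (β.erase (n+1)) (α.erase (n+1))
      else chi β * sg n (α.erase (n+1)) β
    else
      if n+1 ∈ β then sg n (β.erase (n+1)) α
      else sg n α β

lemma sg_pm : ∀ (n : ℕ) (α β : Finset ℕ), sg n α β = 1 ∨ sg n α β = -1
  | 0, _, _ => Or.inl rfl
  | n+1, α, β => by
    rw [sg]
    split_ifs <;>
    first
      | exact sg_pm n _ _
      | (rcases chi_pm (β.erase (n+1)) with h | h <;>
          rcases sg_pm n (β.erase (n+1)) (α.erase (n+1)) with h2 | h2 <;>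
          rw [h, h2] <;> norm_num)
      | (rcases chi_pm β with h | h <;>
          rcases sg_pm n (α.erase (n+1)) β with h2 | h2 <;>
          rw [h, h2] <;> norm_num)

lemma sg_mul_self (n : ℕ) (α β : Finset ℕ) : sg n α β * sg n α β = 1 := by
  rcases sg_pm n α β with h | h <;> rw [h] <;> norm_num

lemma sg_ne_zero (n : ℕ) (α β : Finset ℕ) : sg n α β ≠ 0 := by
  rcases sg_pm n α β with h | h <;> rw [h] <;> norm_num

lemma sd_subset {n : ℕ} {α β : Finset ℕ} (hα : α ⊆ Finset.Icc 1 n)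
    (hβ : β ⊆ Finset.Icc 1 n) : α ∆ β ⊆ Finset.Icc 1 n := by
  intro x hx
  rw [Finset.mem_symmDiff] at hx
  rcases hx with ⟨h,_⟩|⟨h,_⟩
  exacts [hα h, hβ h]

lemma sd_mm {m : ℕ} {α β : Finset ℕ} (ha : m ∈ α) (hb : m ∈ β) :
    m ∉ α ∆ β ∧ α ∆ β = α.erase m ∆ β.erase m := by
  constructor
  · simp [Finset.mem_symmDiff, ha, hb]
  · ext x
    simp only [Finset.mem_symmDiff, Finset.mem_erase]
    by_cases hx : x = m <;> simp [hx, ha, hb] <;> tauto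

lemma sd_mn {m : ℕ} {α β : Finset ℕ} (ha : m ∈ α) (hb : m ∉ β) :
    m ∈ α ∆ β ∧ (α ∆ β).erase m = α.erase m ∆ β := by
  constructor
  · simp [Finset.mem_symmDiff, ha, hb]
  · ext x
    simp only [Finset.mem_symmDiff, Finset.mem_erase]
    by_cases hx : x = m <;> simp [hx, ha, hb] <;> tauto

lemma sd_nm {m : ℕ} {α β : Finset ℕ} (ha : m ∉ α) (hb : m ∈ β) :
    m ∈ α ∆ β ∧ (α ∆ β).erase m = α ∆ β.erase m := by
  constructor
  · simp [Finset.mem_symmDiff, ha, hb]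
  · ext x
    simp only [Finset.mem_symmDiff, Finset.mem_erase]
    by_cases hx : x = m <;> simp [hx, ha, hb] <;> tauto

lemma sd_nn {m : ℕ} {α β : Finset ℕ} (ha : m ∉ α) (hb : m ∉ β) :
    m ∉ α ∆ β := by simp [Finset.mem_symmDiff, ha, hb]

lemma CD.mul_basis : ∀ n (α β : Finset ℕ), α ⊆ Finset.Icc 1 n → β ⊆ Finset.Icc 1 n →
    CD.mul (fun _ => 1) n (CD.basis n α) (CD.basis n β) = sg n α β • CD.basis n (α ∆ β)
  | 0, α, β, _, _ => by
    show (1:ℝ) * 1 = sg 0 α β • (1:ℝ)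
    show (1:ℝ) * 1 = (1:ℝ) • (1:ℝ)
    norm_num
  | n+1, α, β, hα, hβ => by
    have hz1 : ∀ x : CD n, CD.mul (fun _ => (1:ℝ)) n x 0 = 0 := fun x => (CD.mul_zero' _ n x).1
    have hz2 : ∀ x : CD n, CD.mul (fun _ => (1:ℝ)) n 0 x = 0 := fun x => (CD.mul_zero' _ n x).2
    by_cases ha : n+1 ∈ α <;> by_cases hb : n+1 ∈ β
    · -- both contain n+1
      obtain ⟨hs1, hs2⟩ := sd_mm ha hb
      erw [CD.basis_def_mem n α ha, CD.basis_def_mem n β hb,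
        CD.basis_def_not_mem n _ hs1, CD.mul_def, CD.smul_def]
      simp only [Prod.fst, Prod.snd]
      refine CD.mk_inj n ?_ ?_
      · rw [hz2, CD.conj_basis n _ (subset_erase_of_subset_Icc hβ),
          (CD.smul_mul _ n _ _ _).1,
          CD.mul_basis n _ _ (subset_erase_of_subset_Icc hβ) (subset_erase_of_subset_Icc hα),
          hs2, symmDiff_comm (α.erase (n+1)) (β.erase (n+1)), sg, if_pos ha, if_pos hb]
        show (0:CD n) - (1:ℝ) • _ = _
        rw [one_smul, zero_sub, ← smul_assoc, ← neg_smul]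
        norm_num
      · rw [hz1, CD.conj_zero n, hz1, smul_zero]
        simp
    · -- n+1 ∈ α, n+1 ∉ β
      obtain ⟨hs1, hs2⟩ := sd_mn ha hb
      erw [CD.basis_def_mem n α ha, CD.basis_def_not_mem n β hb,
        CD.basis_def_mem n _ hs1, CD.mul_def, CD.smul_def]
      simp only [Prod.fst, Prod.snd]
      refine CD.mk_inj n ?_ ?_
      · rw [hz2, CD.conj_zero n, hz2, smul_zero, sub_zero, smul_zero]
      · rw [hz2, CD.conj_basis n β (subset_of_subset_Icc hβ hb),
          (CD.smul_mul _ n _ _ _).2,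
          CD.mul_basis n _ _ (subset_erase_of_subset_Icc hα) (subset_of_subset_Icc hβ hb),
          hs2, sg, if_pos ha, if_neg hb]
        rw [zero_add, ← smul_assoc]
        norm_num
    · -- n+1 ∉ α, n+1 ∈ β
      obtain ⟨hs1, hs2⟩ := sd_nm ha hb
      erw [CD.basis_def_not_mem n α ha, CD.basis_def_mem n β hb,
        CD.basis_def_mem n _ hs1, CD.mul_def, CD.smul_def]
      simp only [Prod.fst, Prod.snd]
      refine CD.mk_inj n ?_ ?_
      · rw [hz1, CD.conj_basis n _ (subset_erase_of_subset_Icc hβ),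
          (CD.smul_mul _ n _ _ _).1, hz1, smul_zero]
        simp
      · rw [CD.conj_zero n, hz1, add_zero,
          CD.mul_basis n _ _ (subset_erase_of_subset_Icc hβ) (subset_of_subset_Icc hα ha),
          hs2, sg, if_neg ha, if_pos hb, symmDiff_comm]
    · -- n+1 ∉ α, n+1 ∉ β
      have hs1 := sd_nn ha hb
      erw [CD.basis_def_not_mem n α ha, CD.basis_def_not_mem n β hb,
        CD.basis_def_not_mem n _ hs1, CD.mul_def, CD.smul_def]
      simp only [Prod.fst, Prod.snd]
      refine CD.mk_inj n ?_ ?_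
      · rw [CD.conj_zero n, hz2, smul_zero, sub_zero,
          CD.mul_basis n _ _ (subset_of_subset_Icc hα ha) (subset_of_subset_Icc hβ hb),
          sg, if_neg ha, if_neg hb]
      · rw [hz2, CD.conj_basis n β (subset_of_subset_Icc hβ hb), (CD.smul_mul _ n _ _ _).2,
          hz2, smul_zero, zero_add, smul_zero]

lemma sg_empty : ∀ (n : ℕ) (α : Finset ℕ), sg n ∅ α = 1 ∧ sg n α ∅ = 1
  | 0, α => ⟨rfl, rfl⟩
  | n+1, α => by
    have h1 := sg_empty n α
    have h2 := sg_empty n (α.erase (n+1))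
    constructor <;>
    · simp only [sg, Finset.notMem_empty, if_false, chi_empty, one_mul]
      split_ifs <;> simp [h1.1, h1.2, h2.1, h2.2]

lemma sg_self : ∀ (n : ℕ) (α : Finset ℕ), α.Nonempty → α ⊆ Finset.Icc 1 n → sg n α α = -1
  | 0, α, hne, hsub => by
    exfalso
    obtain ⟨x, hx⟩ := hne
    simpa using hsub hx
  | n+1, α, hne, hsub => by
    by_cases ha : n+1 ∈ α
    · rw [sg, if_pos ha, if_pos ha]
      rcases Finset.eq_empty_or_nonempty (α.erase (n+1)) with he | hne'
      · rw [he, chi_empty, (sg_empty n ∅).1]; norm_num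
      · rw [chi_of_ne _ (Finset.nonempty_iff_ne_empty.mp hne'),
          sg_self n _ hne' (subset_erase_of_subset_Icc hsub)]
        norm_num
    · rw [sg, if_neg ha, if_neg ha]
      exact sg_self n α hne (subset_of_subset_Icc hsub ha)

lemma sg_antisymm : ∀ (n : ℕ) (α β : Finset ℕ), α.Nonempty → β.Nonempty → α ≠ β →
    α ⊆ Finset.Icc 1 n → β ⊆ Finset.Icc 1 n → sg n α β = -sg n β α
  | 0, α, β, hne, _, _, hsub, _ => by
    exfalso; obtain ⟨x, hx⟩ := hne; simpa using hsub hx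
  | n+1, α, β, hαne, hβne, hab, hα, hβ => by
    by_cases ha : n+1 ∈ α <;> by_cases hb : n+1 ∈ β
    · -- both
      rw [sg, if_pos ha, if_pos hb, sg, if_pos hb, if_pos ha]
      have hab' : α.erase (n+1) ≠ β.erase (n+1) := by
        intro h
        apply hab
        ext x
        by_cases hx : x = n+1
        · simp [hx, ha, hb]
        · constructor <;> intro hmem
          · have : x ∈ α.erase (n+1) := Finset.mem_erase.mpr ⟨hx, hmem⟩
            rw [h] at this; exact (Finset.mem_erase.mp this).2
          · have : x ∈ β.erase (n+1) := Finset.mem_erase.mpr ⟨hx, hmem⟩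
            rw [← h] at this; exact (Finset.mem_erase.mp this).2
      rcases Finset.eq_empty_or_nonempty (α.erase (n+1)) with hea | hna
      · have hnb : β.erase (n+1) ≠ ∅ := fun h => hab' (hea.trans h.symm)
        rw [hea, chi_of_ne _ hnb, chi_empty, (sg_empty n _).2, (sg_empty n _).1]
        norm_num
      · rcases Finset.eq_empty_or_nonempty (β.erase (n+1)) with heb | hnb
        · rw [heb, chi_of_ne _ (Finset.nonempty_iff_ne_empty.mp hna), chi_empty,
            (sg_empty n _).1, (sg_empty n _).2]
          norm_num
        · rw [chi_of_ne _ (Finset.nonempty_iff_ne_empty.mp hna),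
            chi_of_ne _ (Finset.nonempty_iff_ne_empty.mp hnb),
            sg_antisymm n _ _ hnb hna (fun h => hab' h.symm)
              (subset_erase_of_subset_Icc hβ) (subset_erase_of_subset_Icc hα)]
          ring
    · -- n+1 ∈ α, n+1 ∉ β
      rw [sg, if_pos ha, if_neg hb, sg, if_neg hb, if_pos ha,
        chi_of_ne β (Finset.nonempty_iff_ne_empty.mp hβne)]
      ring
    · -- n+1 ∉ α, n+1 ∈ β
      rw [sg, if_neg ha, if_pos hb, sg, if_pos hb, if_neg ha,
        chi_of_ne α (Finset.nonempty_iff_ne_empty.mp hαne)]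
      ring
    · rw [sg, if_neg ha, if_neg hb, sg, if_neg hb, if_neg ha]
      exact sg_antisymm n α β hαne hβne hab
        (subset_of_subset_Icc hα ha) (subset_of_subset_Icc hβ hb)

lemma ne_empty_of_nonempty {α : Finset ℕ} (h : α.Nonempty) : α ≠ ∅ :=
  Finset.nonempty_iff_ne_empty.mp h

lemma sd_empty_left (β : Finset ℕ) : (∅ : Finset ℕ) ∆ β = β := by
  rw [← Finset.bot_eq_empty, bot_symmDiff]

lemma sd_empty_right (α : Finset ℕ) : α ∆ (∅ : Finset ℕ) = α := by
  rw [← Finset.bot_eq_empty, symmDiff_bot]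

lemma sd_self (α : Finset ℕ) : α ∆ α = (∅ : Finset ℕ) := by
  rw [symmDiff_self, Finset.bot_eq_empty]

lemma sd_nonempty {α β : Finset ℕ} (h : α ≠ β) : (α ∆ β).Nonempty := by
  rw [Finset.nonempty_iff_ne_empty]
  intro hh
  exact h (by rwa [← Finset.bot_eq_empty, symmDiff_eq_bot] at hh)

lemma sg_L45 : ∀ (n : ℕ) (α β : Finset ℕ), α ⊆ Finset.Icc 1 n → β ⊆ Finset.Icc 1 n →
    (α.Nonempty → sg n α (α ∆ β) = -sg n α β) ∧
    (β.Nonempty → sg n (α ∆ β) β = -sg n α β)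
  | 0, α, β, hα, hβ => by
    constructor <;> intro h <;> exfalso <;> obtain ⟨x, hx⟩ := h
    · simpa using hα hx
    · simpa using hβ hx
  | n+1, α, β, hα, hβ => by
    by_cases ha : n+1 ∈ α <;> by_cases hb : n+1 ∈ β
    · -- case m ∈ α, m ∈ β
      obtain ⟨hs1, hs2⟩ := sd_mm ha hb
      have hα' := subset_erase_of_subset_Icc hα
      have hβ' := subset_erase_of_subset_Icc hβ
      constructor <;> intro hne
      · rw [sg, if_pos ha, if_neg hs1, hs2, sg, if_pos ha, if_pos hb, neg_mul, neg_neg]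
        rcases Finset.eq_empty_or_nonempty (α.erase (n+1)) with hea | hna
        · rw [hea, sd_empty_left, (sg_empty n _).1, (sg_empty n _).2]
        · rw [(sg_L45 n _ _ hα' hβ').1 hna]
          rcases Finset.eq_empty_or_nonempty (β.erase (n+1)) with heb | hnb
          · rw [heb, sd_empty_right, chi_of_ne _ (ne_empty_of_nonempty hna), chi_empty,
              (sg_empty n _).2, (sg_empty n _).1]
            norm_num
          · by_cases he : α.erase (n+1) = β.erase (n+1)
            · rw [he, sd_self, chi_empty, chi_of_ne _ (ne_empty_of_nonempty hnb),
                sg_self n _ hnb hβ']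
              norm_num
            · rw [chi_of_ne _ (fun hh => he (by
                  rwa [← Finset.bot_eq_empty, symmDiff_eq_bot] at hh)),
                chi_of_ne _ (ne_empty_of_nonempty hnb),
                sg_antisymm n _ _ hnb hna (fun hh => he hh.symm) hβ' hα']
      · rw [sg, if_neg hs1, if_pos hb, hs2, sg, if_pos ha, if_pos hb, neg_mul, neg_neg]
        rcases Finset.eq_empty_or_nonempty (β.erase (n+1)) with heb | hnb
        · rw [heb, chi_empty, one_mul, (sg_empty n _).1, (sg_empty n _).1]
        · rw [symmDiff_comm, (sg_L45 n _ _ hβ' hα').1 hnb,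
            chi_of_ne _ (ne_empty_of_nonempty hnb)]
          ring
    · -- case m ∈ α, m ∉ β
      obtain ⟨hs1, hs2⟩ := sd_mn ha hb
      have hα' := subset_erase_of_subset_Icc hα
      have hβ' := subset_of_subset_Icc hβ hb
      constructor <;> intro hne
      · rw [sg, if_pos ha, if_pos hs1, hs2, sg, if_pos ha, if_neg hb]
        rcases Finset.eq_empty_or_nonempty (α.erase (n+1)) with hea | hna
        · rw [hea, sd_empty_left, (sg_empty n _).2, (sg_empty n _).1]
          ring
        · rcases Finset.eq_empty_or_nonempty β with heb | hnb
          · rw [heb, sd_empty_right, chi_empty, chi_of_ne _ (ne_empty_of_nonempty hna),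
              sg_self n _ hna hα', (sg_empty n _).2]
            norm_num
          · by_cases he : α.erase (n+1) = β
            · rw [he, sd_self, chi_empty, chi_of_ne _ (ne_empty_of_nonempty hnb),
                (sg_empty n _).1, ← he, sg_self n _ hna hα']
              norm_num
            · rw [chi_of_ne _ (fun hh => he (by
                  rwa [← Finset.bot_eq_empty, symmDiff_eq_bot] at hh)),
                chi_of_ne _ (ne_empty_of_nonempty hnb),
                sg_antisymm n _ _ (sd_nonempty he) hna
                  (by rw [Ne, symmDiff_eq_left, Finset.bot_eq_empty]
                      exact ne_empty_of_nonempty hnb)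
                  (sd_subset hα' hβ') hα',
                (sg_L45 n _ _ hα' hβ').1 hna]
              ring
      · rw [sg, if_pos hs1, if_neg hb, hs2, sg, if_pos ha, if_neg hb,
          (sg_L45 n _ _ hα' hβ').2 hne]
        ring
    · -- case m ∉ α, m ∈ β
      obtain ⟨hs1, hs2⟩ := sd_nm ha hb
      have hα' := subset_of_subset_Icc hα ha
      have hβ' := subset_erase_of_subset_Icc hβ
      constructor <;> intro hne
      · rw [sg, if_neg ha, if_pos hs1, hs2, sg, if_neg ha, if_pos hb, symmDiff_comm,
          (sg_L45 n _ _ hβ' hα').2 hne]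
      · rw [sg, if_pos hs1, if_pos hb, hs2, sg, if_neg ha, if_pos hb]
        rcases Finset.eq_empty_or_nonempty (β.erase (n+1)) with heb | hnb
        · rw [heb, chi_empty, (sg_empty n _).1, (sg_empty n _).1]
          norm_num
        · rw [symmDiff_comm, (sg_L45 n _ _ hβ' hα').1 hnb,
            chi_of_ne _ (ne_empty_of_nonempty hnb)]
          ring
    · -- case m ∉ α, m ∉ β
      have hs1 := sd_nn ha hb
      have hα' := subset_of_subset_Icc hα ha
      have hβ' := subset_of_subset_Icc hβ hb
      constructor <;> intro hne
      · rw [sg, if_neg ha, if_neg hs1, sg, if_neg ha, if_neg hb,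
          (sg_L45 n _ _ hα' hβ').1 hne]
      · rw [sg, if_neg hs1, if_neg hb, sg, if_neg ha, if_neg hb,
          (sg_L45 n _ _ hα' hβ').2 hne]

lemma sg_L4 {n : ℕ} {α β : Finset ℕ} (hα : α ⊆ Finset.Icc 1 n) (hβ : β ⊆ Finset.Icc 1 n)
    (hne : α.Nonempty) : sg n α (α ∆ β) = -sg n α β := (sg_L45 n α β hα hβ).1 hne

lemma sg_L5 {n : ℕ} {α β : Finset ℕ} (hα : α ⊆ Finset.Icc 1 n) (hβ : β ⊆ Finset.Icc 1 n)
    (hne : β.Nonempty) : sg n (α ∆ β) β = -sg n α β := (sg_L45 n α β hα hβ).2 hne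

lemma sg_I2 {n : ℕ} {α β : Finset ℕ} (hα : α ⊆ Finset.Icc 1 n) (hβ : β ⊆ Finset.Icc 1 n)
    (hαn : α.Nonempty) (hβn : β.Nonempty) (hne : α ≠ β) :
    sg n β (α ∆ β) = sg n α β := by
  have h1 : β ≠ α ∆ β := by
    intro hh
    have : α = ∅ := by
      have := symmDiff_eq_right.mp hh.symm
      rwa [Finset.bot_eq_empty] at this
    exact ne_empty_of_nonempty hαn this
  rw [sg_antisymm n β (α ∆ β) hβn (sd_nonempty hne) h1 hβ (sd_subset hα hβ),
    sg_L5 hα hβ hβn]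
  ring

/-- The associator sign product. -/
def gg (n : ℕ) (α β γ : Finset ℕ) : ℝ :=
  sg n α β * sg n (α ∆ β) γ * sg n β γ * sg n α (β ∆ γ)

lemma gg_pm (n : ℕ) (α β γ : Finset ℕ) : gg n α β γ = 1 ∨ gg n α β γ = -1 := by
  unfold gg
  rcases sg_pm n α β with h1 | h1 <;> rcases sg_pm n (α ∆ β) γ with h2 | h2 <;>
    rcases sg_pm n β γ with h3 | h3 <;> rcases sg_pm n α (β ∆ γ) with h4 | h4 <;>
    rw [h1, h2, h3, h4] <;> norm_num

lemma CD.assoc_basis (n : ℕ) (α β γ : Finset ℕ) (hα : α ⊆ Finset.Icc 1 n)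
    (hβ : β ⊆ Finset.Icc 1 n) (hγ : γ ⊆ Finset.Icc 1 n) :
    CD.assoc (fun _ => 1) n (CD.basis n α) (CD.basis n β) (CD.basis n γ) =
      (sg n α β * sg n (α ∆ β) γ - sg n β γ * sg n α (β ∆ γ)) • CD.basis n (α ∆ β ∆ γ) := by
  unfold CD.assoc
  rw [CD.mul_basis n α β hα hβ, (CD.smul_mul _ n _ _ _).1,
    CD.mul_basis n (α ∆ β) γ (sd_subset hα hβ) hγ,
    CD.mul_basis n β γ hβ hγ, (CD.smul_mul _ n _ _ _).2,
    CD.mul_basis n α (β ∆ γ) hα (sd_subset hβ hγ),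
    smul_smul, smul_smul, ← symmDiff_assoc, ← sub_smul]

lemma CD.assoc_basis_eq_zero_iff (n : ℕ) (α β γ : Finset ℕ) (hα : α ⊆ Finset.Icc 1 n)
    (hβ : β ⊆ Finset.Icc 1 n) (hγ : γ ⊆ Finset.Icc 1 n) :
    CD.assoc (fun _ => 1) n (CD.basis n α) (CD.basis n β) (CD.basis n γ) = 0 ↔
      gg n α β γ = 1 := by
  rw [CD.assoc_basis n α β γ hα hβ hγ, smul_eq_zero,
    or_iff_left (CD.basis_ne_zero n (α ∆ β ∆ γ))]
  unfold gg
  rcases sg_pm n α β with h1 | h1 <;> rcases sg_pm n (α ∆ β) γ with h2 | h2 <;>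
    rcases sg_pm n β γ with h3 | h3 <;> rcases sg_pm n α (β ∆ γ) with h4 | h4 <;>
    rw [h1, h2, h3, h4] <;> norm_num

lemma gg_odd (n : ℕ) (u v w : Finset ℕ) (hu : u ⊆ Finset.Icc 1 n) (hv : v ⊆ Finset.Icc 1 n)
    (hw : w ⊆ Finset.Icc 1 n) (hun : u.Nonempty) (hvn : v.Nonempty) (hwn : w.Nonempty)
    (huv : u ≠ v) (huw : u ≠ w) (hvw : v ≠ w) (hx : v ≠ u ∆ w) :
    gg n u w v * gg n u v w * gg n v u w = -1 := by
  have c1 : sg n w v = -sg n v w := sg_antisymm n w v hwn hvn (Ne.symm hvw) hw hv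
  have c2 : sg n v u = -sg n u v := sg_antisymm n v u hvn hun (Ne.symm huv) hv hu
  have c3 : sg n v (u ∆ w) = -sg n (u ∆ w) v :=
    sg_antisymm n v (u ∆ w) hvn (sd_nonempty huw) hx hv (sd_subset hu hw)
  have e1 : w ∆ v = v ∆ w := symmDiff_comm w v
  have e2 : v ∆ u = u ∆ v := symmDiff_comm v u
  unfold gg
  rw [c1, c2, c3, e1, e2]
  rcases sg_pm n u w with h1 | h1 <;> rcases sg_pm n (u ∆ w) v with h2 | h2 <;>
    rcases sg_pm n v w with h3 | h3 <;> rcases sg_pm n u (v ∆ w) with h4 | h4 <;>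
    rcases sg_pm n u v with h5 | h5 <;> rcases sg_pm n (u ∆ v) w with h6 | h6 <;>
    rw [h1, h2, h3, h4, h5, h6] <;> norm_num

lemma gg_R1 (n : ℕ) (u v w : Finset ℕ) (hu : u ⊆ Finset.Icc 1 n) (hv : v ⊆ Finset.Icc 1 n)
    (hw : w ⊆ Finset.Icc 1 n) (hun : u.Nonempty) :
    gg n u (u ∆ v) w = gg n u v w := by
  unfold gg
  have e1 : u ∆ (u ∆ v) = v := symmDiff_symmDiff_cancel_left u v
  have e2 : (u ∆ v) ∆ w = u ∆ (v ∆ w) := symmDiff_assoc u v w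
  rw [e1, e2, sg_L4 hu hv hun, sg_L4 hu (sd_subset hv hw) hun]
  ring

lemma gg_R2 (n : ℕ) (α β γ : Finset ℕ) (hα : α ⊆ Finset.Icc 1 n) (hβ : β ⊆ Finset.Icc 1 n)
    (hγ : γ ⊆ Finset.Icc 1 n) (hαn : α.Nonempty) (hβn : β.Nonempty) (hγn : γ.Nonempty)
    (hαβ : α ≠ β) (hαγ : α ≠ γ) (hβγ : β ≠ γ) (hγs : γ ≠ α ∆ β) :
    gg n β (α ∆ β) γ = -(gg n α γ β * gg n α β γ) := by
  have hagb : α ∆ γ ≠ β := by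
    intro hh
    apply hγs
    rw [← hh, symmDiff_symmDiff_cancel_left]
  have r1 : sg n β (α ∆ β) = sg n α β := sg_I2 hα hβ hαn hβn hαβ
  have r2 : sg n β ((α ∆ β) ∆ γ) = sg n (α ∆ γ) β := by
    have f1 : (α ∆ β) ∆ γ = (α ∆ γ) ∆ β := by
      ext x; simp only [Finset.mem_symmDiff]; tauto
    rw [f1]
    exact sg_I2 (sd_subset hα hγ) hβ (sd_nonempty hαγ) hβn hagb
  have r3 : sg n γ β = -sg n β γ := sg_antisymm n γ β hγn hβn (Ne.symm hβγ) hγ hβ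
  have e1 : β ∆ (α ∆ β) = α := by
    rw [symmDiff_comm α β, symmDiff_symmDiff_cancel_left]
  have e3 : γ ∆ β = β ∆ γ := symmDiff_comm γ β
  unfold gg
  rw [r2, r1, e1, r3, e3]
  rcases sg_pm n α β with h1 | h1 <;> rcases sg_pm n α γ with h2 | h2 <;>
    rcases sg_pm n (α ∆ β) γ with h3 | h3 <;> rcases sg_pm n (α ∆ γ) β with h4 | h4 <;>
    rcases sg_pm n β γ with h5 | h5 <;> rcases sg_pm n α (β ∆ γ) with h6 | h6 <;>
    rw [h1, h2, h3, h4, h5, h6] <;> norm_num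

lemma gg_R3 (n : ℕ) (α β γ : Finset ℕ) (hα : α ⊆ Finset.Icc 1 n) (hβ : β ⊆ Finset.Icc 1 n)
    (hγ : γ ⊆ Finset.Icc 1 n) (hαn : α.Nonempty) (hβn : β.Nonempty) (hγn : γ.Nonempty)
    (hαβ : α ≠ β) (hαγ : α ≠ γ) (hβγ : β ≠ γ) (hγs : γ ≠ α ∆ β) :
    gg n β γ (α ∆ β) = -(gg n α γ β * gg n α γ (α ∆ β)) := by
  have hagb : α ∆ γ ≠ β := by
    intro hh
    apply hγs
    rw [← hh, symmDiff_symmDiff_cancel_left]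
  have r3 : sg n γ β = -sg n β γ := sg_antisymm n γ β hγn hβn (Ne.symm hβγ) hγ hβ
  have r4 : sg n β (γ ∆ (α ∆ β)) = sg n (α ∆ γ) β := by
    have f1 : γ ∆ (α ∆ β) = (α ∆ γ) ∆ β := by
      ext x; simp only [Finset.mem_symmDiff]; tauto
    rw [f1]
    exact sg_I2 (sd_subset hα hγ) hβ (sd_nonempty hαγ) hβn hagb
  have r5 : sg n α (γ ∆ (α ∆ β)) = -sg n α (β ∆ γ) := by
    have f2 : γ ∆ (α ∆ β) = α ∆ (β ∆ γ) := by
      ext x; simp only [Finset.mem_symmDiff]; tauto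
    rw [f2]
    exact sg_L4 hα (sd_subset hβ hγ) hαn
  have r6 : sg n (β ∆ γ) (α ∆ β) = -sg n (α ∆ γ) (α ∆ β) := by
    have f3 : β ∆ γ = (α ∆ γ) ∆ (α ∆ β) := by
      ext x; simp only [Finset.mem_symmDiff]; tauto
    rw [f3]
    exact sg_L5 (sd_subset hα hγ) (sd_subset hα hβ) (sd_nonempty hαβ)
  have e3 : γ ∆ β = β ∆ γ := symmDiff_comm γ β
  unfold gg
  rw [r4, r5, r6, r3, e3]
  rcases sg_pm n β γ with h1 | h1 <;> rcases sg_pm n (α ∆ γ) (α ∆ β) with h2 | h2 <;>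
    rcases sg_pm n γ (α ∆ β) with h3 | h3 <;> rcases sg_pm n (α ∆ γ) β with h4 | h4 <;>
    rcases sg_pm n α γ with h5 | h5 <;> rcases sg_pm n α (β ∆ γ) with h6 | h6 <;>
    rw [h1, h2, h3, h4, h5, h6] <;> norm_num

lemma CD.assoc_smul₁ (n : ℕ) (r : ℝ) (x y z : CD n) :
    CD.assoc (fun _ => 1) n (r • x) y z = r • CD.assoc (fun _ => 1) n x y z := by
  unfold CD.assoc
  rw [(CD.smul_mul _ n r x y).1, (CD.smul_mul _ n r (CD.mul _ n x y) z).1,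
    (CD.smul_mul _ n r x (CD.mul _ n y z)).1, smul_sub]

lemma CD.assoc_smul₂ (n : ℕ) (r : ℝ) (x y z : CD n) :
    CD.assoc (fun _ => 1) n x (r • y) z = r • CD.assoc (fun _ => 1) n x y z := by
  unfold CD.assoc
  rw [(CD.smul_mul _ n r x y).2, (CD.smul_mul _ n r (CD.mul _ n x y) z).1,
    (CD.smul_mul _ n r y z).1, (CD.smul_mul _ n r x (CD.mul _ n y z)).2, smul_sub]

lemma CD.assoc_smul₃ (n : ℕ) (r : ℝ) (x y z : CD n) :
    CD.assoc (fun _ => 1) n x y (r • z) = r • CD.assoc (fun _ => 1) n x y z := by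
  unfold CD.assoc
  rw [(CD.smul_mul _ n r (CD.mul _ n x y) z).2, (CD.smul_mul _ n r y z).2,
    (CD.smul_mul _ n r x (CD.mul _ n y z)).2, smul_sub]

section mk
variable {n : ℕ} {x y z : CD n} {g1 g2 g3 : ℝ}

lemma mk_A (i1 : CD.assoc (fun _ => 1) n x z y = 0 ↔ g1 = 1)
    (i2 : CD.assoc (fun _ => 1) n x y z = 0 ↔ g2 = 1)
    (i3 : CD.assoc (fun _ => 1) n y x z = 0 ↔ g3 = 1) (e1 : g1 = -1) (e2 : g2 = 1) (e3 : g3 = 1) :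
    CD.hasType n x y z NAType.A :=
  ⟨fun hh => by have h := i1.mp hh; rw [e1] at h; norm_num at h, i2.mpr e2, i3.mpr e3⟩

lemma mk_B (i1 : CD.assoc (fun _ => 1) n x z y = 0 ↔ g1 = 1)
    (i2 : CD.assoc (fun _ => 1) n x y z = 0 ↔ g2 = 1)
    (i3 : CD.assoc (fun _ => 1) n y x z = 0 ↔ g3 = 1) (e1 : g1 = 1) (e2 : g2 = -1) (e3 : g3 = 1) :
    CD.hasType n x y z NAType.B :=
  ⟨i1.mpr e1, fun hh => by have h := i2.mp hh; rw [e2] at h; norm_num at h, i3.mpr e3⟩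

lemma mk_C (i1 : CD.assoc (fun _ => 1) n x z y = 0 ↔ g1 = 1)
    (i2 : CD.assoc (fun _ => 1) n x y z = 0 ↔ g2 = 1)
    (i3 : CD.assoc (fun _ => 1) n y x z = 0 ↔ g3 = 1) (e1 : g1 = 1) (e2 : g2 = 1) (e3 : g3 = -1) :
    CD.hasType n x y z NAType.C :=
  ⟨i1.mpr e1, i2.mpr e2, fun hh => by have h := i3.mp hh; rw [e3] at h; norm_num at h⟩

lemma mk_X (i1 : CD.assoc (fun _ => 1) n x z y = 0 ↔ g1 = 1)
    (i2 : CD.assoc (fun _ => 1) n x y z = 0 ↔ g2 = 1)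
    (i3 : CD.assoc (fun _ => 1) n y x z = 0 ↔ g3 = 1) (e1 : g1 = -1) (e2 : g2 = -1) (e3 : g3 = -1) :
    CD.hasType n x y z NAType.X :=
  ⟨fun hh => by have h := i1.mp hh; rw [e1] at h; norm_num at h,
   fun hh => by have h := i2.mp hh; rw [e2] at h; norm_num at h,
   fun hh => by have h := i3.mp hh; rw [e3] at h; norm_num at h⟩

end mk

end CDproof

open scoped symmDiff
open CDproof

/-- (Cycles theorem.) The triples `(b,c,d)`, `(b,b·c,d)`,
`(c,b·c,d)` each have a well-defined non-associativity type, and the pattern of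
types is one of the eight silos. -/
theorem stmt18 (n : ℕ) (α β γ : Finset ℕ) (h : CD.IsTriad n α β γ)
    (b c d : CD n) (hb : b = CD.basis n α) (hc : c = CD.basis n β)
    (hd : d = CD.basis n γ) :
    ∃ T₁ T₂ T₃ : NAType,
      CD.hasType n b c d T₁ ∧
      CD.hasType n b (CD.mul1 n b c) d T₂ ∧
      CD.hasType n c (CD.mul1 n b c) d T₃ ∧
      ((T₁, T₂, T₃) = (NAType.A, NAType.A, NAType.A) ∨
       (T₁, T₂, T₃) = (NAType.A, NAType.C, NAType.C) ∨
       (T₁, T₂, T₃) = (NAType.X, NAType.B, NAType.B) ∨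
       (T₁, T₂, T₃) = (NAType.B, NAType.B, NAType.A) ∨
       (T₁, T₂, T₃) = (NAType.B, NAType.X, NAType.C) ∨
       (T₁, T₂, T₃) = (NAType.C, NAType.A, NAType.B) ∨
       (T₁, T₂, T₃) = (NAType.C, NAType.C, NAType.X) ∨
       (T₁, T₂, T₃) = (NAType.X, NAType.X, NAType.X)) := by
  obtain ⟨⟨hαn, hα⟩, ⟨hβn, hβ⟩, ⟨hγn, hγ⟩, hαβ, hαγ, hβγ, hd1, hd2⟩ := h
  subst hb hc hd
  -- basic set facts
  have hγs : γ ≠ α ∆ β := by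
    intro hh
    rcases sg_pm n α β with hsg | hsg
    · exact hd1 (by rw [CD.mul_basis n α β hα hβ, hsg, one_smul, hh])
    · exact hd2 (by rw [CD.mul_basis n α β hα hβ, hsg, neg_one_smul, neg_neg, hh])
  have hsub_s : α ∆ β ⊆ Finset.Icc 1 n := sd_subset hα hβ
  have hsn : (α ∆ β).Nonempty := sd_nonempty hαβ
  have hαs : α ≠ α ∆ β := by
    intro hh
    have : β = ⊥ := symmDiff_eq_left.mp hh.symm
    rw [Finset.bot_eq_empty] at this
    exact ne_empty_of_nonempty hβn this
  have hβs : β ≠ α ∆ β := by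
    intro hh
    have : α = ⊥ := symmDiff_eq_right.mp hh.symm
    rw [Finset.bot_eq_empty] at this
    exact ne_empty_of_nonempty hαn this
  have hβag : β ≠ α ∆ γ := by
    intro hh
    exact hγs (by rw [hh, symmDiff_symmDiff_cancel_left])
  have hsag : α ∆ β ≠ α ∆ γ := by
    intro hh
    apply hβγ
    have h2 : α ∆ (α ∆ β) = α ∆ (α ∆ γ) := by rw [hh]
    rwa [symmDiff_symmDiff_cancel_left, symmDiff_symmDiff_cancel_left] at h2
  have hsbg : α ∆ β ≠ β ∆ γ := by
    intro hh
    apply hαγ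
    have h2 : (α ∆ β) ∆ β = (β ∆ γ) ∆ β := by rw [hh]
    rwa [symmDiff_symmDiff_cancel_right, symmDiff_comm β γ,
      symmDiff_symmDiff_cancel_right] at h2
  -- the product expansion of b·c
  have hy : CD.mul1 n (CD.basis n α) (CD.basis n β) = sg n α β • CD.basis n (α ∆ β) :=
    CD.mul_basis n α β hα hβ
  have hr0 : sg n α β ≠ 0 := sg_ne_zero n α β
  -- the nine associator iff statements
  have i11 : CD.assoc (fun _ => 1) n (CD.basis n α) (CD.basis n γ) (CD.basis n β) = 0 ↔ gg n α γ β = 1 :=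
    CD.assoc_basis_eq_zero_iff n α γ β hα hγ hβ
  have i12 : CD.assoc (fun _ => 1) n (CD.basis n α) (CD.basis n β) (CD.basis n γ) = 0 ↔ gg n α β γ = 1 :=
    CD.assoc_basis_eq_zero_iff n α β γ hα hβ hγ
  have i13 : CD.assoc (fun _ => 1) n (CD.basis n β) (CD.basis n α) (CD.basis n γ) = 0 ↔ gg n β α γ = 1 :=
    CD.assoc_basis_eq_zero_iff n β α γ hβ hα hγ
  have i21 : CD.assoc (fun _ => 1) n (CD.basis n α) (CD.basis n γ)
      (CD.mul1 n (CD.basis n α) (CD.basis n β)) = 0 ↔ gg n α γ (α ∆ β) = 1 := by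
    rw [hy, CD.assoc_smul₃, smul_eq_zero, or_iff_right hr0]
    exact CD.assoc_basis_eq_zero_iff n α γ (α ∆ β) hα hγ hsub_s
  have i22 : CD.assoc (fun _ => 1) n (CD.basis n α)
      (CD.mul1 n (CD.basis n α) (CD.basis n β)) (CD.basis n γ) = 0 ↔ gg n α (α ∆ β) γ = 1 := by
    rw [hy, CD.assoc_smul₂, smul_eq_zero, or_iff_right hr0]
    exact CD.assoc_basis_eq_zero_iff n α (α ∆ β) γ hα hsub_s hγ
  have i23 : CD.assoc (fun _ => 1) n (CD.mul1 n (CD.basis n α) (CD.basis n β))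
      (CD.basis n α) (CD.basis n γ) = 0 ↔ gg n (α ∆ β) α γ = 1 := by
    rw [hy, CD.assoc_smul₁, smul_eq_zero, or_iff_right hr0]
    exact CD.assoc_basis_eq_zero_iff n (α ∆ β) α γ hsub_s hα hγ
  have i31 : CD.assoc (fun _ => 1) n (CD.basis n β) (CD.basis n γ)
      (CD.mul1 n (CD.basis n α) (CD.basis n β)) = 0 ↔ gg n β γ (α ∆ β) = 1 := by
    rw [hy, CD.assoc_smul₃, smul_eq_zero, or_iff_right hr0]
    exact CD.assoc_basis_eq_zero_iff n β γ (α ∆ β) hβ hγ hsub_s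
  have i32 : CD.assoc (fun _ => 1) n (CD.basis n β)
      (CD.mul1 n (CD.basis n α) (CD.basis n β)) (CD.basis n γ) = 0 ↔ gg n β (α ∆ β) γ = 1 := by
    rw [hy, CD.assoc_smul₂, smul_eq_zero, or_iff_right hr0]
    exact CD.assoc_basis_eq_zero_iff n β (α ∆ β) γ hβ hsub_s hγ
  have i33 : CD.assoc (fun _ => 1) n (CD.mul1 n (CD.basis n α) (CD.basis n β))
      (CD.basis n β) (CD.basis n γ) = 0 ↔ gg n (α ∆ β) β γ = 1 := by
    rw [hy, CD.assoc_smul₁, smul_eq_zero, or_iff_right hr0]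
    exact CD.assoc_basis_eq_zero_iff n (α ∆ β) β γ hsub_s hβ hγ
  -- the six sign relations
  have P1 : gg n α γ β * gg n α β γ * gg n β α γ = -1 :=
    gg_odd n α β γ hα hβ hγ hαn hβn hγn hαβ hαγ hβγ hβag
  have P2 : gg n α γ (α ∆ β) * gg n α (α ∆ β) γ * gg n (α ∆ β) α γ = -1 :=
    gg_odd n α (α ∆ β) γ hα hsub_s hγ hαn hsn hγn hαs hαγ (fun hh => hγs hh.symm)
      hsag
  have P3 : gg n β γ (α ∆ β) * gg n β (α ∆ β) γ * gg n (α ∆ β) β γ = -1 :=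
    gg_odd n β (α ∆ β) γ hβ hsub_s hγ hβn hsn hγn hβs hβγ (fun hh => hγs hh.symm)
      hsbg
  have R1 : gg n α (α ∆ β) γ = gg n α β γ := gg_R1 n α β γ hα hβ hγ hαn
  have R2 : gg n β (α ∆ β) γ = -(gg n α γ β * gg n α β γ) :=
    gg_R2 n α β γ hα hβ hγ hαn hβn hγn hαβ hαγ hβγ hγs
  have R3 : gg n β γ (α ∆ β) = -(gg n α γ β * gg n α γ (α ∆ β)) :=
    gg_R3 n α β γ hα hβ hγ hαn hβn hγn hαβ hαγ hβγ hγs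
  rcases gg_pm n α γ β with hx1 | hx1 <;> rcases gg_pm n α β γ with hx2 | hx2 <;>
    rcases gg_pm n α γ (α ∆ β) with hy1 | hy1
  -- (1,1,1) → (C, C, X)
  · have hx3 : gg n β α γ = -1 := by rw [hx1, hx2] at P1; linarith
    have hy2 : gg n α (α ∆ β) γ = 1 := by rw [R1, hx2]
    have hy3 : gg n (α ∆ β) α γ = -1 := by rw [hy1, hy2] at P2; linarith
    have hz2 : gg n β (α ∆ β) γ = -1 := by rw [R2, hx1, hx2]; norm_num
    have hz1 : gg n β γ (α ∆ β) = -1 := by rw [R3, hx1, hy1]; norm_num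
    have hz3 : gg n (α ∆ β) β γ = -1 := by rw [hz1, hz2] at P3; linarith
    exact ⟨_, _, _, mk_C i11 i12 i13 hx1 hx2 hx3, mk_C i21 i22 i23 hy1 hy2 hy3,
      mk_X i31 i32 i33 hz1 hz2 hz3,
      Or.inr (Or.inr (Or.inr (Or.inr (Or.inr (Or.inr (Or.inl rfl))))))⟩
  -- (1,1,-1) → (C, A, B)
  · have hx3 : gg n β α γ = -1 := by rw [hx1, hx2] at P1; linarith
    have hy2 : gg n α (α ∆ β) γ = 1 := by rw [R1, hx2]
    have hy3 : gg n (α ∆ β) α γ = 1 := by rw [hy1, hy2] at P2; linarith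
    have hz2 : gg n β (α ∆ β) γ = -1 := by rw [R2, hx1, hx2]; norm_num
    have hz1 : gg n β γ (α ∆ β) = 1 := by rw [R3, hx1, hy1]; norm_num
    have hz3 : gg n (α ∆ β) β γ = 1 := by rw [hz1, hz2] at P3; linarith
    exact ⟨_, _, _, mk_C i11 i12 i13 hx1 hx2 hx3, mk_A i21 i22 i23 hy1 hy2 hy3,
      mk_B i31 i32 i33 hz1 hz2 hz3,
      Or.inr (Or.inr (Or.inr (Or.inr (Or.inr (Or.inl rfl)))))⟩
  -- (1,-1,1) → (B, B, A)
  · have hx3 : gg n β α γ = 1 := by rw [hx1, hx2] at P1; linarith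
    have hy2 : gg n α (α ∆ β) γ = -1 := by rw [R1, hx2]
    have hy3 : gg n (α ∆ β) α γ = 1 := by rw [hy1, hy2] at P2; linarith
    have hz2 : gg n β (α ∆ β) γ = 1 := by rw [R2, hx1, hx2]; norm_num
    have hz1 : gg n β γ (α ∆ β) = -1 := by rw [R3, hx1, hy1]; norm_num
    have hz3 : gg n (α ∆ β) β γ = 1 := by rw [hz1, hz2] at P3; linarith
    exact ⟨_, _, _, mk_B i11 i12 i13 hx1 hx2 hx3, mk_B i21 i22 i23 hy1 hy2 hy3,
      mk_A i31 i32 i33 hz1 hz2 hz3,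
      Or.inr (Or.inr (Or.inr (Or.inl rfl)))⟩
  -- (1,-1,-1) → (B, X, C)
  · have hx3 : gg n β α γ = 1 := by rw [hx1, hx2] at P1; linarith
    have hy2 : gg n α (α ∆ β) γ = -1 := by rw [R1, hx2]
    have hy3 : gg n (α ∆ β) α γ = -1 := by rw [hy1, hy2] at P2; linarith
    have hz2 : gg n β (α ∆ β) γ = 1 := by rw [R2, hx1, hx2]; norm_num
    have hz1 : gg n β γ (α ∆ β) = 1 := by rw [R3, hx1, hy1]; norm_num
    have hz3 : gg n (α ∆ β) β γ = -1 := by rw [hz1, hz2] at P3; linarith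
    exact ⟨_, _, _, mk_B i11 i12 i13 hx1 hx2 hx3, mk_X i21 i22 i23 hy1 hy2 hy3,
      mk_C i31 i32 i33 hz1 hz2 hz3,
      Or.inr (Or.inr (Or.inr (Or.inr (Or.inl rfl))))⟩
  -- (-1,1,1) → (A, C, C)
  · have hx3 : gg n β α γ = 1 := by rw [hx1, hx2] at P1; linarith
    have hy2 : gg n α (α ∆ β) γ = 1 := by rw [R1, hx2]
    have hy3 : gg n (α ∆ β) α γ = -1 := by rw [hy1, hy2] at P2; linarith
    have hz2 : gg n β (α ∆ β) γ = 1 := by rw [R2, hx1, hx2]; norm_num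
    have hz1 : gg n β γ (α ∆ β) = 1 := by rw [R3, hx1, hy1]; norm_num
    have hz3 : gg n (α ∆ β) β γ = -1 := by rw [hz1, hz2] at P3; linarith
    exact ⟨_, _, _, mk_A i11 i12 i13 hx1 hx2 hx3, mk_C i21 i22 i23 hy1 hy2 hy3,
      mk_C i31 i32 i33 hz1 hz2 hz3,
      Or.inr (Or.inl rfl)⟩
  -- (-1,1,-1) → (A, A, A)
  · have hx3 : gg n β α γ = 1 := by rw [hx1, hx2] at P1; linarith
    have hy2 : gg n α (α ∆ β) γ = 1 := by rw [R1, hx2]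
    have hy3 : gg n (α ∆ β) α γ = 1 := by rw [hy1, hy2] at P2; linarith
    have hz2 : gg n β (α ∆ β) γ = 1 := by rw [R2, hx1, hx2]; norm_num
    have hz1 : gg n β γ (α ∆ β) = -1 := by rw [R3, hx1, hy1]; norm_num
    have hz3 : gg n (α ∆ β) β γ = 1 := by rw [hz1, hz2] at P3; linarith
    exact ⟨_, _, _, mk_A i11 i12 i13 hx1 hx2 hx3, mk_A i21 i22 i23 hy1 hy2 hy3,
      mk_A i31 i32 i33 hz1 hz2 hz3, Or.inl rfl⟩
  -- (-1,-1,1) → (X, B, B)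
  · have hx3 : gg n β α γ = -1 := by rw [hx1, hx2] at P1; linarith
    have hy2 : gg n α (α ∆ β) γ = -1 := by rw [R1, hx2]
    have hy3 : gg n (α ∆ β) α γ = 1 := by rw [hy1, hy2] at P2; linarith
    have hz2 : gg n β (α ∆ β) γ = -1 := by rw [R2, hx1, hx2]; norm_num
    have hz1 : gg n β γ (α ∆ β) = 1 := by rw [R3, hx1, hy1]; norm_num
    have hz3 : gg n (α ∆ β) β γ = 1 := by rw [hz1, hz2] at P3; linarith
    exact ⟨_, _, _, mk_X i11 i12 i13 hx1 hx2 hx3, mk_B i21 i22 i23 hy1 hy2 hy3,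
      mk_B i31 i32 i33 hz1 hz2 hz3,
      Or.inr (Or.inr (Or.inl rfl))⟩
  -- (-1,-1,-1) → (X, X, X)
  · have hx3 : gg n β α γ = -1 := by rw [hx1, hx2] at P1; linarith
    have hy2 : gg n α (α ∆ β) γ = -1 := by rw [R1, hx2]
    have hy3 : gg n (α ∆ β) α γ = -1 := by rw [hy1, hy2] at P2; linarith
    have hz2 : gg n β (α ∆ β) γ = -1 := by rw [R2, hx1, hx2]; norm_num
    have hz1 : gg n β γ (α ∆ β) = -1 := by rw [R3, hx1, hy1]; norm_num
    have hz3 : gg n (α ∆ β) β γ = -1 := by rw [hz1, hz2] at P3; linarith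
    exact ⟨_, _, _, mk_X i11 i12 i13 hx1 hx2 hx3, mk_X i21 i22 i23 hy1 hy2 hy3,
      mk_X i31 i32 i33 hz1 hz2 hz3,
      Or.inr (Or.inr (Or.inr (Or.inr (Or.inr (Or.inr (Or.inr rfl))))))⟩
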